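/- For any n ∈ ℤ and r ≥ 0, one has Σ_{s+t=r, s,t≥0} π^{binom(t,2)}·(-q)^{-t}·[n+s choose s,t]_{q,π} = (πq)^{nr}. -/

import Mathlib

open scoped Classical

noncomputable section

/-- A concrete model of the ring `ℚ(q)^π := ℚ(q)[π]/(π² - 1)`: since `2` is
invertible, the Chinese Remainder Theorem (evaluating `π` at `±1`) identifies it
with `ℚ(q) × ℚ(q)`, with `q = (q, q)` and `π = (1, -1)`. -/
abbrev Rqpi : Type := RatFunc ℚ × RatFunc ℚ

/-- The element `q` of `ℚ(q)^π`. -/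
def qv : Rqpi := (RatFunc.X, RatFunc.X)

/-- The element `π` of `ℚ(q)^π`. -/
def piv : Rqpi := (1, -1)

/-- The `(q,π)`-integer `[n]_{q,π} = ((πq)^n - q^{-n}) / (πq - q^{-1})`. -/
def qint (n : ℤ) : Rqpi :=
  ((piv * qv) ^ n - qv ^ (-n)) / (piv * qv - qv ^ (-1 : ℤ))

/-- The `(q,π)`-factorial `[n]!_{q,π} = [n]_{q,π} [n-1]_{q,π} ⋯ [1]_{q,π}`. -/
def qfact (n : ℕ) : Rqpi := ∏ i ∈ Finset.range n, qint ((i : ℤ) + 1)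

/-- The `(q,π)`-binomial coefficient
`[n choose r]_{q,π} = [n]_{q,π} [n-1]_{q,π} ⋯ [n-r+1]_{q,π} / [r]!_{q,π}`,
with the convention that it is `0` for `r < 0`. -/
def qbinom (n r : ℤ) : Rqpi :=
  if r < 0 then 0
  else (∏ i ∈ Finset.range r.toNat, qint (n - (i : ℤ))) / qfact r.toNat


/-- The `(q,π)`-trinomial coefficient `[n choose r,s]_{q,π} = [n choose r]_{q,π} · [n-r choose s]_{q,π}`
(it vanishes when `r < 0` or `s < 0`). -/
def qtrinom (n r s : ℤ) : Rqpi := qbinom n r * qbinom (n - r) s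

namespace QPiAux
open Finset RatFunc Polynomial

abbrev K : Type := RatFunc ℚ

def kint (ε : K) (n : ℤ) : K :=
  ((ε * RatFunc.X) ^ n - RatFunc.X ^ (-n)) / (ε * RatFunc.X - RatFunc.X ^ (-1 : ℤ))

def kfact (ε : K) (n : ℕ) : K := ∏ i ∈ Finset.range n, kint ε ((i : ℤ) + 1)

def kbinom (ε : K) (n r : ℤ) : K :=
  if r < 0 then 0 else (∏ i ∈ Finset.range r.toNat, kint ε (n - (i : ℤ))) / kfact ε r.toNat

lemma hX : (RatFunc.X : K) ≠ 0 := RatFunc.X_ne_zero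

lemma kadd (ε : K) (hε : ε ≠ 0) (m m' : ℤ) :
    kint ε (m + m') = (ε * RatFunc.X) ^ m' * kint ε m + RatFunc.X ^ (-m) * kint ε m' := by
  have hu : ε * RatFunc.X ≠ 0 := mul_ne_zero hε hX
  unfold kint
  rw [mul_div_assoc', mul_div_assoc', ← add_div]
  congr 1
  have h1 : (ε * RatFunc.X) ^ (m + m') = (ε * RatFunc.X) ^ m' * (ε * RatFunc.X) ^ m := by
    rw [← zpow_add₀ hu]; ring_nf
  have h2 : (RatFunc.X : K) ^ (-(m + m')) = RatFunc.X ^ (-m) * RatFunc.X ^ (-m') := by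
    rw [← zpow_add₀ hX]; ring_nf
  rw [h1, h2]; ring

lemma kbinom_neg (ε : K) (m : ℤ) {r : ℤ} (h : r < 0) : kbinom ε m r = 0 := if_pos h

lemma kbinom_ofNat (ε : K) (m : ℤ) (k : ℕ) :
    kbinom ε m (k : ℤ) = (∏ i ∈ Finset.range k, kint ε (m - (i : ℤ))) / kfact ε k := by
  rw [kbinom, if_neg (by omega)]
  simp

lemma kbinom_zero (ε : K) (m : ℤ) : kbinom ε m 0 = 1 := by
  have := kbinom_ofNat ε m 0
  simpa [kfact] using this

lemma kfact_succ (ε : K) (k : ℕ) : kfact ε (k + 1) = kfact ε k * kint ε ((k : ℤ) + 1) :=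
  Finset.prod_range_succ _ _

lemma kfact_ne (ε : K) (hki : ∀ k : ℕ, kint ε ((k : ℤ) + 1) ≠ 0) (k : ℕ) : kfact ε k ≠ 0 :=
  Finset.prod_ne_zero_iff.mpr fun i _ => hki i

lemma P1 (ε : K) (hε : ε ≠ 0) (hki : ∀ k : ℕ, kint ε ((k : ℤ) + 1) ≠ 0) (m k : ℤ) :
    kbinom ε m k = (ε * RatFunc.X) ^ k * kbinom ε (m - 1) k
      + RatFunc.X ^ (k - m) * kbinom ε (m - 1) (k - 1) := by
  rcases lt_trichotomy k 0 with h | h | h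
  · rw [kbinom_neg ε m h, kbinom_neg ε (m-1) h, kbinom_neg ε (m-1) (by omega)]; ring
  · subst h
    rw [kbinom_zero, kbinom_zero, kbinom_neg ε (m-1) (by omega)]
    simp
  · obtain ⟨j, rfl⟩ : ∃ j : ℕ, k = (j : ℤ) + 1 := ⟨(k - 1).toNat, by omega⟩
    rw [show (j : ℤ) + 1 - 1 = (j : ℤ) by ring,
      show (j : ℤ) + 1 = ((j + 1 : ℕ) : ℤ) by push_cast; ring,
      kbinom_ofNat, kbinom_ofNat, kbinom_ofNat]
    have hp1 : ∏ i ∈ Finset.range (j + 1), kint ε (m - (i : ℤ))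
        = (∏ i ∈ Finset.range j, kint ε (m - 1 - (i : ℤ))) * kint ε m := by
      rw [Finset.prod_range_succ']
      congr 1
      · exact Finset.prod_congr rfl fun i _ => by congr 1; push_cast; ring
      · congr 1; simp
    have hp2 : ∏ i ∈ Finset.range (j + 1), kint ε (m - 1 - (i : ℤ))
        = (∏ i ∈ Finset.range j, kint ε (m - 1 - (i : ℤ))) * kint ε (m - 1 - (j : ℤ)) :=
      Finset.prod_range_succ _ _
    rw [hp1, hp2, kfact_succ]
    have hF := kfact_ne ε hki j
    have hI := hki j
    have key := kadd ε hε (m - 1 - (j : ℤ)) ((j : ℤ) + 1)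
    rw [show m - 1 - (j:ℤ) + ((j:ℤ) + 1) = m by ring,
      show -(m - 1 - (j:ℤ)) = (j:ℤ) + 1 - m by ring] at key
    push_cast
    rw [key]
    field_simp


def cc (ε : K) (t : ℕ) : K := (-1) ^ t * ε ^ (t.choose 2) * RatFunc.X ^ (-(t : ℤ))

def Ssum (ε : K) (n : ℤ) (r : ℕ) : K :=
  ∑ t ∈ Finset.range (r + 1),
    cc ε t * (kbinom ε (n + ((r - t : ℕ) : ℤ)) ((r - t : ℕ) : ℤ) * kbinom ε n (t : ℤ))

def fA (ε : K) (n : ℤ) (r t : ℕ) : K :=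
  cc ε t * ((ε * RatFunc.X) ^ ((r:ℤ) - t) * (ε * RatFunc.X) ^ (t:ℤ)) *
    (kbinom ε (n - 1 + ((r:ℤ) - t)) ((r:ℤ) - t) * kbinom ε (n - 1) (t:ℤ))

def fB (ε : K) (n : ℤ) (r t : ℕ) : K :=
  cc ε t * ((ε * RatFunc.X) ^ ((r:ℤ) - t) * RatFunc.X ^ ((t:ℤ) - n)) *
    (kbinom ε (n - 1 + ((r:ℤ) - t)) ((r:ℤ) - t) * kbinom ε (n - 1) ((t:ℤ) - 1))

def fC1 (ε : K) (n : ℤ) (r t : ℕ) : K :=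
  cc ε t * (RatFunc.X ^ (-n) * (ε * RatFunc.X) ^ (t:ℤ) * (ε * RatFunc.X) ^ ((r:ℤ) - t - 1)) *
    (kbinom ε (n - 2 + ((r:ℤ) - t)) ((r:ℤ) - t - 1) * kbinom ε (n - 1) (t:ℤ))

def fC2 (ε : K) (n : ℤ) (r t : ℕ) : K :=
  cc ε t * (RatFunc.X ^ (-n) * (ε * RatFunc.X) ^ (t:ℤ) * RatFunc.X ^ (-n)) *
    (kbinom ε (n - 2 + ((r:ℤ) - t)) ((r:ℤ) - t - 2) * kbinom ε (n - 1) (t:ℤ))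

def fD (ε : K) (n : ℤ) (r t : ℕ) : K :=
  cc ε t * (RatFunc.X ^ (-n) * RatFunc.X ^ ((t:ℤ) - n)) *
    (kbinom ε (n - 1 + ((r:ℤ) - t)) ((r:ℤ) - t - 1) * kbinom ε (n - 1) ((t:ℤ) - 1))

lemma choose_two_succ (t : ℕ) : (t+1).choose 2 = t.choose 2 + t := by
  rw [show 2 = 1 + 1 from rfl, Nat.choose_succ_succ, Nat.choose_one_right]
  exact add_comm _ _

lemma expand_term (ε : K) (hε : ε ≠ 0) (hki : ∀ k : ℕ, kint ε ((k : ℤ) + 1) ≠ 0)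
    (n : ℤ) (r : ℕ) : ∀ t ∈ Finset.range (r + 1),
    cc ε t * (kbinom ε (n + ((r - t : ℕ) : ℤ)) ((r - t : ℕ) : ℤ) * kbinom ε n (t : ℤ))
      = fA ε n r t + (fB ε n r t + fC1 ε n r t + (fC2 ε n r t + fD ε n r t)) := by
  intro t ht
  have hc : ((r - t : ℕ) : ℤ) = (r:ℤ) - t := by
    have := Finset.mem_range.mp ht; omega
  rw [hc]
  have h1 := P1 ε hε hki (n + ((r:ℤ) - t)) ((r:ℤ) - t)
  rw [show n + ((r:ℤ) - t) - 1 = n - 1 + ((r:ℤ) - t) by ring,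
    show (r:ℤ) - t - (n + ((r:ℤ) - t)) = -n by ring] at h1
  have h2 := P1 ε hε hki n (t:ℤ)
  have h3 := P1 ε hε hki (n - 1 + ((r:ℤ) - t)) ((r:ℤ) - t - 1)
  rw [show n - 1 + ((r:ℤ) - t) - 1 = n - 2 + ((r:ℤ) - t) by ring,
    show (r:ℤ) - t - 1 - (n - 1 + ((r:ℤ) - t)) = -n by ring,
    show (r:ℤ) - t - 1 - 1 = (r:ℤ) - t - 2 by ring] at h3
  unfold fA fB fC1 fC2 fD
  linear_combination (cc ε t * kbinom ε n (t:ℤ)) * h1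
    + (cc ε t * ((ε * RatFunc.X) ^ ((r:ℤ) - t) * kbinom ε (n - 1 + ((r:ℤ) - t)) ((r:ℤ) - t))
        + cc ε t * (RatFunc.X ^ (-n) * kbinom ε (n - 1 + ((r:ℤ) - t)) ((r:ℤ) - t - 1))) * h2
    + (cc ε t * (RatFunc.X ^ (-n) * (ε * RatFunc.X) ^ (t:ℤ) * kbinom ε (n - 1) (t:ℤ))) * h3

lemma hpow (ε : K) (hε : ε ≠ 0) (t : ℕ) (n : ℤ) :
    ε ^ t * (RatFunc.X ^ (-((t:ℤ) + 1)) * RatFunc.X ^ ((t:ℤ) + 1 - n))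
      = RatFunc.X ^ (-(t:ℤ)) * RatFunc.X ^ (-n) * (ε * RatFunc.X) ^ (t:ℤ) := by
  rw [mul_zpow, zpow_natCast, ← zpow_add₀ hX, ← zpow_add₀ hX]
  rw [show -((t:ℤ) + 1) + ((t:ℤ) + 1 - n) = -n by ring]
  rw [mul_comm (RatFunc.X ^ (-(t:ℤ) + -n)) _, mul_assoc, ← zpow_add₀ hX,
    show (t:ℤ) + (-(t:ℤ) + -n) = -n by ring]


lemma cancelBC1 (ε : K) (hε : ε ≠ 0) (n : ℤ) (r t : ℕ) :
    fB ε n r (t+1) + fC1 ε n r t = 0 := by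
  unfold fB fC1 cc
  rw [choose_two_succ]
  push_cast
  rw [show (r:ℤ) - ((t:ℤ) + 1) = (r:ℤ) - t - 1 by ring,
    show n - 1 + ((r:ℤ) - t - 1) = n - 2 + ((r:ℤ) - t) by ring,
    show (t:ℤ) + 1 - 1 = (t:ℤ) by ring]
  linear_combination (-((-1:K)^t * ε ^ (t.choose 2) * (ε * RatFunc.X) ^ ((r:ℤ) - t - 1) *
    (kbinom ε (n - 2 + ((r:ℤ) - t)) ((r:ℤ) - t - 1) * kbinom ε (n - 1) (t:ℤ)))) * hpow ε hε t n

lemma cancelC2D (ε : K) (hε : ε ≠ 0) (n : ℤ) (r t : ℕ) :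
    fC2 ε n r t + fD ε n r (t+1) = 0 := by
  unfold fC2 fD cc
  rw [choose_two_succ]
  push_cast
  rw [show (r:ℤ) - ((t:ℤ) + 1) = (r:ℤ) - t - 1 by ring,
    show n - 1 + ((r:ℤ) - t - 1) = n - 2 + ((r:ℤ) - t) by ring,
    show (r:ℤ) - t - 1 - 1 = (r:ℤ) - t - 2 by ring,
    show (t:ℤ) + 1 - 1 = (t:ℤ) by ring]
  linear_combination (-((-1:K)^t * ε ^ (t.choose 2) * RatFunc.X ^ (-n) *
    (kbinom ε (n - 2 + ((r:ℤ) - t)) ((r:ℤ) - t - 2) * kbinom ε (n - 1) (t:ℤ)))) * hpow ε hε t n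

lemma fB_zero (ε : K) (n : ℤ) (r : ℕ) : fB ε n r 0 = 0 := by
  unfold fB
  rw [kbinom_neg ε (n - 1) (show ((0:ℕ):ℤ) - 1 < 0 by norm_num)]
  ring

lemma fD_zero (ε : K) (n : ℤ) (r : ℕ) : fD ε n r 0 = 0 := by
  unfold fD
  rw [kbinom_neg ε (n - 1) (show ((0:ℕ):ℤ) - 1 < 0 by norm_num)]
  ring

lemma fC1_last (ε : K) (n : ℤ) (r : ℕ) : fC1 ε n r r = 0 := by
  unfold fC1
  rw [kbinom_neg ε (n - 2 + ((r:ℤ) - r)) (show (r:ℤ) - (r:ℤ) - 1 < 0 by omega)]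
  ring

lemma fC2_last (ε : K) (n : ℤ) (r : ℕ) : fC2 ε n r r = 0 := by
  unfold fC2
  rw [kbinom_neg ε (n - 2 + ((r:ℤ) - r)) (show (r:ℤ) - (r:ℤ) - 2 < 0 by omega)]
  ring

lemma step (ε : K) (hε : ε ≠ 0) (hki : ∀ k : ℕ, kint ε ((k : ℤ) + 1) ≠ 0) (n : ℤ) (r : ℕ) :
    Ssum ε n r = (ε * RatFunc.X) ^ (r:ℤ) * Ssum ε (n - 1) r := by
  have hu : ε * RatFunc.X ≠ 0 := mul_ne_zero hε hX
  have hA : ∑ t ∈ Finset.range (r+1), fA ε n r t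
      = (ε * RatFunc.X) ^ (r:ℤ) * Ssum ε (n-1) r := by
    rw [Ssum, Finset.mul_sum]
    refine Finset.sum_congr rfl fun t ht => ?_
    have hc : ((r - t : ℕ) : ℤ) = (r:ℤ) - t := by have := Finset.mem_range.mp ht; omega
    rw [hc]
    unfold fA
    rw [← zpow_add₀ hu, show (r:ℤ) - t + t = (r:ℤ) by ring]
    ring
  have hBC1 : (∑ t ∈ Finset.range (r+1), fB ε n r t)
      + (∑ t ∈ Finset.range (r+1), fC1 ε n r t) = 0 := by
    rw [Finset.sum_range_succ' (fB ε n r) r, Finset.sum_range_succ (fC1 ε n r) r,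
      fB_zero, fC1_last, add_zero, add_zero, ← Finset.sum_add_distrib]
    exact Finset.sum_eq_zero fun t _ => cancelBC1 ε hε n r t
  have hC2D : (∑ t ∈ Finset.range (r+1), fC2 ε n r t)
      + (∑ t ∈ Finset.range (r+1), fD ε n r t) = 0 := by
    rw [Finset.sum_range_succ (fC2 ε n r) r, Finset.sum_range_succ' (fD ε n r) r,
      fC2_last, fD_zero, add_zero, add_zero, ← Finset.sum_add_distrib]
    exact Finset.sum_eq_zero fun t _ => cancelC2D ε hε n r t
  rw [Ssum, Finset.sum_congr rfl (expand_term ε hε hki n r)]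
  simp only [Finset.sum_add_distrib]
  linear_combination hA + hBC1 + hC2D


lemma kint_zero (ε : K) : kint ε 0 = 0 := by simp [kint]

lemma kbinom_nat_self (ε : K) (hki : ∀ k : ℕ, kint ε ((k : ℤ) + 1) ≠ 0) (r : ℕ) :
    kbinom ε (r:ℤ) (r:ℤ) = 1 := by
  rw [kbinom_ofNat]
  have h : ∏ i ∈ Finset.range r, kint ε ((r:ℤ) - i) = kfact ε r := by
    rw [kfact]
    conv_rhs => rw [← Finset.prod_range_reflect (fun j => kint ε ((j:ℤ) + 1)) r]
    refine Finset.prod_congr rfl fun i hi => ?_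
    have hir := Finset.mem_range.mp hi
    congr 1
    omega
  rw [h, div_self (kfact_ne ε hki r)]

lemma kbinom_zero_top (ε : K) (t : ℕ) (ht : 1 ≤ t) : kbinom ε 0 (t:ℤ) = 0 := by
  rw [kbinom_ofNat,
    Finset.prod_eq_zero (Finset.mem_range.mpr (show 0 < t by omega))
      (show kint ε (0 - ((0:ℕ):ℤ)) = 0 by norm_num [kint_zero]), zero_div]

lemma Ssum_base (ε : K) (hki : ∀ k : ℕ, kint ε ((k : ℤ) + 1) ≠ 0) (r : ℕ) :
    Ssum ε 0 r = 1 := by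
  have hother : ∀ b ∈ Finset.range (r+1), b ≠ 0 →
      cc ε b * (kbinom ε (0 + ((r - b : ℕ):ℤ)) ((r - b : ℕ):ℤ) * kbinom ε 0 (b:ℤ)) = 0 := by
    intro b _ hb
    rw [kbinom_zero_top ε b (by omega)]
    ring
  rw [Ssum, Finset.sum_eq_single_of_mem 0 (Finset.mem_range.mpr (by omega)) hother]
  have h1 := kbinom_nat_self ε hki r
  simp [cc, kbinom_zero, h1]

lemma keyK (ε : K) (hε : ε ≠ 0) (hki : ∀ k : ℕ, kint ε ((k : ℤ) + 1) ≠ 0) (n : ℤ) (r : ℕ) :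
    Ssum ε n r = (ε * RatFunc.X) ^ (n * (r:ℤ)) := by
  have hu : ε * RatFunc.X ≠ 0 := mul_ne_zero hε hX
  induction n using Int.induction_on with
  | zero => rw [Ssum_base ε hki r]; norm_num
  | succ i ih =>
      have hs := step ε hε hki ((i:ℤ)+1) r
      rw [show (i:ℤ) + 1 - 1 = (i:ℤ) by ring, ih] at hs
      rw [hs, ← zpow_add₀ hu]
      congr 1
      ring
  | pred i ih =>
      have hs := step ε hε hki (-(i:ℤ)) r
      rw [ih] at hs
      have h2 : Ssum ε (-(i:ℤ) - 1) r
          = (ε * RatFunc.X) ^ (-(i:ℤ) * (r:ℤ)) / (ε * RatFunc.X) ^ ((r:ℤ)) := by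
        rw [eq_div_iff (zpow_ne_zero _ hu)]
        linear_combination -hs
      rw [h2, ← zpow_sub₀ hu]
      congr 1
      ring

lemma Xpow_ne_one (m : ℕ) (hm : 0 < m) : (RatFunc.X : K) ^ m ≠ 1 := by
  intro h
  have h2 : algebraMap (Polynomial ℚ) K (Polynomial.X ^ m - Polynomial.C 1)
      = algebraMap (Polynomial ℚ) K 0 := by
    rw [map_sub, map_pow, RatFunc.algebraMap_X, Polynomial.C_1, map_one, map_zero, h, sub_self]
  exact Polynomial.X_pow_sub_C_ne_zero hm 1 (RatFunc.algebraMap_injective ℚ h2)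

lemma Xpow_ne_negone (m : ℕ) (hm : 0 < m) : (RatFunc.X : K) ^ m ≠ -1 := by
  intro h
  have h2 : algebraMap (Polynomial ℚ) K (Polynomial.X ^ m - Polynomial.C (-1))
      = algebraMap (Polynomial ℚ) K 0 := by
    rw [map_sub, map_pow, RatFunc.algebraMap_X, show Polynomial.C (-1:ℚ) = -1 by simp,
      map_neg, map_one, map_zero, h, sub_self]
  exact Polynomial.X_pow_sub_C_ne_zero hm (-1) (RatFunc.algebraMap_injective ℚ h2)

lemma den_ne (ε : K) (hε1 : ε = 1 ∨ ε = -1) :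
    ε * RatFunc.X - RatFunc.X ^ (-1:ℤ) ≠ 0 := by
  intro h
  have hX2 : ε * RatFunc.X * RatFunc.X = 1 := by
    have he : ε * RatFunc.X = RatFunc.X ^ (-1:ℤ) := sub_eq_zero.mp h
    rw [he, zpow_neg_one]
    exact inv_mul_cancel₀ hX
  rcases hε1 with rfl | rfl
  · apply Xpow_ne_one 2 (by norm_num)
    rw [sq]
    linear_combination hX2
  · apply Xpow_ne_negone 2 (by norm_num)
    rw [sq]
    linear_combination -hX2

lemma kint_ne (ε : K) (hε1 : ε = 1 ∨ ε = -1) (k : ℕ) : kint ε ((k:ℤ) + 1) ≠ 0 := by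
  have hnum : (ε * RatFunc.X) ^ ((k:ℤ)+1) - RatFunc.X ^ (-((k:ℤ)+1)) ≠ 0 := by
    intro h
    have h1 : (ε * RatFunc.X) ^ ((k:ℤ)+1) = RatFunc.X ^ (-((k:ℤ)+1)) := sub_eq_zero.mp h
    rw [show (k:ℤ) + 1 = ((k+1:ℕ):ℤ) by push_cast; ring, zpow_neg, zpow_natCast,
      zpow_natCast] at h1
    have h2 : (ε * RatFunc.X) ^ (k+1) * RatFunc.X ^ (k+1) = 1 := by
      rw [h1]
      exact inv_mul_cancel₀ (pow_ne_zero _ hX)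
    rw [mul_pow, mul_assoc, ← pow_add] at h2
    rcases hε1 with rfl | rfl
    · rw [one_pow, one_mul] at h2
      exact Xpow_ne_one _ (by omega) h2
    · rcases Nat.even_or_odd (k+1) with he | ho
      · rw [he.neg_one_pow, one_mul] at h2
        exact Xpow_ne_one _ (by omega) h2
      · rw [ho.neg_one_pow] at h2
        exact Xpow_ne_negone (k+1+(k+1)) (by omega) (by linear_combination -h2)
  exact div_ne_zero hnum (den_ne ε hε1)

lemma negX_zpow (t : ℕ) : (-RatFunc.X : K) ^ (-(t:ℤ)) = (-1)^t * RatFunc.X ^ (-(t:ℤ)) := by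
  rw [zpow_neg, zpow_natCast, neg_pow, mul_inv, ← inv_pow, show ((-1:K))⁻¹ = -1 by norm_num,
    zpow_neg, zpow_natCast]

theorem keyK_anti (ε : K) (hε1 : ε = 1 ∨ ε = -1) (n : ℤ) (r : ℕ) :
    ∑ st ∈ Finset.HasAntidiagonal.antidiagonal r,
        ε ^ (st.2.choose 2) * (-RatFunc.X) ^ (-(st.2 : ℤ)) *
          (kbinom ε (n + (st.1 : ℤ)) (st.1 : ℤ) *
            kbinom ε (n + (st.1 : ℤ) - (st.1 : ℤ)) (st.2 : ℤ))
      = (ε * RatFunc.X) ^ (n * (r : ℤ)) := by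
  have hε : ε ≠ 0 := by rcases hε1 with rfl | rfl <;> norm_num
  have hki := kint_ne ε hε1
  have hS := keyK ε hε hki n r
  rw [Finset.Nat.sum_antidiagonal_eq_sum_range_succ_mk, ← Finset.sum_range_reflect, ← hS]
  unfold Ssum
  refine Finset.sum_congr rfl fun j hj => ?_
  have hjr : j ≤ r := by have := Finset.mem_range.mp hj; omega
  dsimp only
  rw [show r + 1 - 1 - j = r - j by omega, show r - (r - j) = j by omega,
    show n + ((r - j : ℕ):ℤ) - ((r - j:ℕ):ℤ) = n by ring, cc, negX_zpow]
  ring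


lemma qint_fst (n : ℤ) : (qint n).1 = kint 1 n := rfl

lemma qint_snd (n : ℤ) : (qint n).2 = kint (-1) n := rfl

lemma qfact_fst (n : ℕ) : (qfact n).1 = kfact 1 n := by
  unfold qfact kfact
  rw [Prod.fst_prod]
  exact Finset.prod_congr rfl fun i _ => rfl

lemma qfact_snd (n : ℕ) : (qfact n).2 = kfact (-1) n := by
  unfold qfact kfact
  rw [Prod.snd_prod]
  exact Finset.prod_congr rfl fun i _ => rfl

lemma qbinom_fst (n r : ℤ) : (qbinom n r).1 = kbinom 1 n r := by
  unfold qbinom kbinom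
  split_ifs with h
  · rfl
  · have e : ((∏ i ∈ Finset.range r.toNat, qint (n - (i:ℤ))) / qfact r.toNat).1
        = (∏ i ∈ Finset.range r.toNat, qint (n - (i:ℤ))).1 / (qfact r.toNat).1 := rfl
    rw [e, Prod.fst_prod, qfact_fst]
    congr 1

lemma qbinom_snd (n r : ℤ) : (qbinom n r).2 = kbinom (-1) n r := by
  unfold qbinom kbinom
  split_ifs with h
  · rfl
  · have e : ((∏ i ∈ Finset.range r.toNat, qint (n - (i:ℤ))) / qfact r.toNat).2
        = (∏ i ∈ Finset.range r.toNat, qint (n - (i:ℤ))).2 / (qfact r.toNat).2 := rfl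
    rw [e, Prod.snd_prod, qfact_snd]
    congr 1

lemma qtrinom_fst (a b c : ℤ) : (qtrinom a b c).1 = kbinom 1 a b * kbinom 1 (a - b) c := by
  unfold qtrinom
  show (qbinom a b).1 * (qbinom (a - b) c).1 = _
  rw [qbinom_fst, qbinom_fst]

lemma qtrinom_snd (a b c : ℤ) : (qtrinom a b c).2 = kbinom (-1) a b * kbinom (-1) (a - b) c := by
  unfold qtrinom
  show (qbinom a b).2 * (qbinom (a - b) c).2 = _
  rw [qbinom_snd, qbinom_snd]

end QPiAux

/-- For any `n ∈ ℤ` and `r ≥ 0`: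
`∑_{s+t=r, s,t ≥ 0} π^{binom(t,2)} (-q)^{-t} [n+s choose s,t]_{q,π} = (πq)^{nr}`. -/
theorem statement3 (n : ℤ) (r : ℕ) :
    ∑ st ∈ Finset.HasAntidiagonal.antidiagonal r,
        piv ^ (st.2.choose 2) * (-qv) ^ (-(st.2 : ℤ)) *
          qtrinom (n + (st.1 : ℤ)) (st.1 : ℤ) (st.2 : ℤ) =
      (piv * qv) ^ (n * (r : ℤ)) := by
  refine Prod.ext ?_ ?_
  · rw [Prod.fst_sum]
    have e2 : ((piv * qv) ^ (n * (r:ℤ))).1 = ((1:QPiAux.K) * RatFunc.X) ^ (n * (r:ℤ)) := rfl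
    rw [e2, ← QPiAux.keyK_anti 1 (Or.inl rfl) n r]
    refine Finset.sum_congr rfl fun st _ => ?_
    have e : (piv ^ (st.2.choose 2) * (-qv) ^ (-(st.2:ℤ)) * qtrinom (n + st.1) st.1 st.2).1
        = (piv ^ (st.2.choose 2)).1 * ((-qv) ^ (-(st.2:ℤ))).1
          * (qtrinom (n + st.1) st.1 st.2).1 := rfl
    rw [e, QPiAux.qtrinom_fst]
    rfl
  · rw [Prod.snd_sum]
    have e2 : ((piv * qv) ^ (n * (r:ℤ))).2 = ((-1:QPiAux.K) * RatFunc.X) ^ (n * (r:ℤ)) := rfl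
    rw [e2, ← QPiAux.keyK_anti (-1) (Or.inr rfl) n r]
    refine Finset.sum_congr rfl fun st _ => ?_
    have e : (piv ^ (st.2.choose 2) * (-qv) ^ (-(st.2:ℤ)) * qtrinom (n + st.1) st.1 st.2).2
        = (piv ^ (st.2.choose 2)).2 * ((-qv) ^ (-(st.2:ℤ))).2
          * (qtrinom (n + st.1) st.1 st.2).2 := rfl
    rw [e, QPiAux.qtrinom_snd]
    rfl
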